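/- Consider the time-varying MPC setup: fix real matrices A (n×n), B (n×m), a horizon T ≥ 1, a real δ ∈ [0,1), and sequences (Q_t)_{t∈ℕ} of symmetric positive definite n×n matrices and (R_t)_{t∈ℕ} of symmetric positive definite m×m matrices satisfying (1−δ)Q_t ⪯ Q_{t+1} ⪯ (1+δ)Q_t and (1−δ)R_t ⪯ R_{t+1} ⪯ (1+δ)R_t for all t. For weights (Q,R) let P_k(Q,R) be the Riccati iterates with P_0 = 0 and P_{k+1} = AᵀP_kA − AᵀP_kB(BᵀP_kB+R)⁻¹BᵀP_kA + Q, and let the MPC closed-loop trajectory from x_0 be x_{t+1} = Ax_t + Bû_t with û_t = −(BᵀP_{T−1}(Q_t,R_t)B+R_t)⁻¹BᵀP_{T−1}(Q_t,R_t)A x_t. Suppose ρ ∈ (0,1) satisfies ρ·P_T(Q_t,R_t) ⪯ Q_t for all t, and α > 1 satisfies P_T(Q_t,R_t) ⪯ α·P_{T−1}(Q_t,R_t) for all t. Set γ = (1−ρ)α/(1−δ). Then for every t ∈ ℕ, x_{t+1}ᵀP_T(Q_{t+1},R_{t+1})x_{t+1} ≤ γ · x_tᵀP_T(Q_t,R_t)x_t.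 -/

import Mathlib

open Matrix

/-- The finite-horizon Riccati iteration with `P 0 = 0` and
`P (k+1) = AᵀP_kA − AᵀP_kB(BᵀP_kB+R)⁻¹BᵀP_kA + Q`. -/
noncomputable def riccati {n m : ℕ} (A : Matrix (Fin n) (Fin n) ℝ)
    (B : Matrix (Fin n) (Fin m) ℝ) (Q : Matrix (Fin n) (Fin n) ℝ)
    (R : Matrix (Fin m) (Fin m) ℝ) : ℕ → Matrix (Fin n) (Fin n) ℝ
  | 0 => 0
  | k + 1 =>
      Aᵀ * riccati A B Q R k * A -
        Aᵀ * riccati A B Q R k * B * (Bᵀ * riccati A B Q R k * B + R)⁻¹ *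
          Bᵀ * riccati A B Q R k * A + Q

/-- The Loewner order on real square matrices: `X ⪯ Y` iff `Y − X` is positive semidefinite. -/
def loewnerLE {n : ℕ} (X Y : Matrix (Fin n) (Fin n) ℝ) : Prop := (Y - X).PosSemidef

section Helpers
variable {p q : ℕ}

lemma psd_smul {c : ℝ} {M : Matrix (Fin p) (Fin p) ℝ} (hc : 0 ≤ c) (hM : M.PosSemidef) :
    (c • M).PosSemidef := by
  constructor
  · have hs : Mᵀ = M := by simpa [conjTranspose_eq_transpose_of_trivial] using hM.1.eq
    simp [Matrix.IsHermitian, conjTranspose_smul, conjTranspose_eq_transpose_of_trivial, hs]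
  · intro x
    exact (hM.smul hc).2 x

lemma pd_smul {c : ℝ} {M : Matrix (Fin p) (Fin p) ℝ} (hc : 0 < c) (hM : M.PosDef) :
    (c • M).PosDef := by
  constructor
  · have hs : Mᵀ = M := by simpa [conjTranspose_eq_transpose_of_trivial] using hM.1.eq
    simp [Matrix.IsHermitian, conjTranspose_smul, conjTranspose_eq_transpose_of_trivial, hs]
  · intro x hx
    exact (hM.smul hc).2 hx

lemma psd_quad {M : Matrix (Fin p) (Fin p) ℝ} (hM : M.PosSemidef) (x : Fin p → ℝ) :
    0 ≤ x ⬝ᵥ (M *ᵥ x) := by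
  have := hM.dotProduct_mulVec_nonneg x
  simpa using this

lemma psd_conj {X : Matrix (Fin p) (Fin p) ℝ} (hX : X.PosSemidef)
    (C : Matrix (Fin p) (Fin q) ℝ) : (Cᵀ * X * C).PosSemidef := by
  simpa [conjTranspose_eq_transpose_of_trivial] using hX.conjTranspose_mul_mul_same C

end Helpers

section Loewner
variable {p q : ℕ}

lemma loewnerLE_refl (X : Matrix (Fin p) (Fin p) ℝ) (hX : Xᵀ = X) : loewnerLE X X := by
  simp only [loewnerLE, sub_self]
  exact Matrix.PosSemidef.zero

lemma loewnerLE_trans {X Y Z : Matrix (Fin p) (Fin p) ℝ}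
    (h1 : loewnerLE X Y) (h2 : loewnerLE Y Z) : loewnerLE X Z := by
  have := h2.add h1
  rwa [sub_add_sub_cancel] at this

lemma loewnerLE_add {X₁ Y₁ X₂ Y₂ : Matrix (Fin p) (Fin p) ℝ}
    (h1 : loewnerLE X₁ Y₁) (h2 : loewnerLE X₂ Y₂) : loewnerLE (X₁ + X₂) (Y₁ + Y₂) := by
  have h := h1.add h2
  have he : Y₁ + Y₂ - (X₁ + X₂) = (Y₁ - X₁) + (Y₂ - X₂) := by abel
  rw [loewnerLE, he]; exact h

lemma loewnerLE_add_psd {X D : Matrix (Fin p) (Fin p) ℝ} (hD : D.PosSemidef) :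
    loewnerLE X (X + D) := by
  simpa [loewnerLE] using hD

lemma loewnerLE_conj {X Y : Matrix (Fin p) (Fin p) ℝ} (h : loewnerLE X Y)
    (C : Matrix (Fin p) (Fin q) ℝ) : loewnerLE (Cᵀ * X * C) (Cᵀ * Y * C) := by
  have := psd_conj h C
  rwa [Matrix.mul_sub, Matrix.sub_mul] at this

lemma loewnerLE_quad {X Y : Matrix (Fin p) (Fin p) ℝ} (h : loewnerLE X Y) (v : Fin p → ℝ) :
    v ⬝ᵥ (X *ᵥ v) ≤ v ⬝ᵥ (Y *ᵥ v) := by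
  have h0 := psd_quad h v
  rw [Matrix.sub_mulVec, dotProduct_sub] at h0
  linarith

end Loewner

section Algebra
variable {n m : ℕ} (A : Matrix (Fin n) (Fin n) ℝ) (B : Matrix (Fin n) (Fin m) ℝ)

lemma quadratic_expand (M : Matrix (Fin m) (Fin m) ℝ) (hMi : (M⁻¹)ᵀ = M⁻¹)
    (hMM : M * M⁻¹ = 1) (hMM' : M⁻¹ * M = 1)
    (K G : Matrix (Fin m) (Fin n) ℝ) :
    (K - M⁻¹ * G)ᵀ * M * (K - M⁻¹ * G)
      = Kᵀ * M * K - Kᵀ * G - Gᵀ * K + Gᵀ * (M⁻¹ * G) := by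
  have ca : M * (M⁻¹ * G) = G := by rw [← Matrix.mul_assoc, hMM, Matrix.one_mul]
  have cb : ∀ Z : Matrix (Fin m) (Fin n) ℝ, M⁻¹ * (M * Z) = Z := fun Z => by
    rw [← Matrix.mul_assoc, hMM', Matrix.one_mul]
  simp only [transpose_sub, transpose_mul, hMi, Matrix.sub_mul, Matrix.mul_sub,
    Matrix.mul_assoc, ca, cb]
  abel

lemma L_expand (P : Matrix (Fin n) (Fin n) ℝ) (R : Matrix (Fin m) (Fin m) ℝ)
    (hP : Pᵀ = P) (K : Matrix (Fin m) (Fin n) ℝ) :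
    (A - B * K)ᵀ * P * (A - B * K) + Kᵀ * R * K
      = Aᵀ * P * A - (Bᵀ * P * A)ᵀ * K - Kᵀ * (Bᵀ * P * A)
        + Kᵀ * (Bᵀ * P * B + R) * K := by
  simp only [transpose_sub, transpose_mul, transpose_transpose, hP, Matrix.sub_mul,
    Matrix.mul_sub, Matrix.add_mul, Matrix.mul_add, Matrix.mul_assoc]
  abel

lemma key_identity (P Q : Matrix (Fin n) (Fin n) ℝ) (R : Matrix (Fin m) (Fin m) ℝ)
    (hP : Pᵀ = P) (hR : Rᵀ = R) (hMu : IsUnit (Bᵀ * P * B + R))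
    (K : Matrix (Fin m) (Fin n) ℝ) :
    (A - B * K)ᵀ * P * (A - B * K) + Kᵀ * R * K + Q
      = (Aᵀ * P * A - Aᵀ * P * B * (Bᵀ * P * B + R)⁻¹ * Bᵀ * P * A + Q)
        + (K - (Bᵀ * P * B + R)⁻¹ * (Bᵀ * P * A))ᵀ * (Bᵀ * P * B + R)
          * (K - (Bᵀ * P * B + R)⁻¹ * (Bᵀ * P * A)) := by
  have hMsym : (Bᵀ * P * B + R)ᵀ = Bᵀ * P * B + R := by
    simp [transpose_add, transpose_mul, transpose_transpose, hP, hR, Matrix.mul_assoc]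
  have hdet : IsUnit (Bᵀ * P * B + R).det := (Matrix.isUnit_iff_isUnit_det _).mp hMu
  have hMM : (Bᵀ * P * B + R) * (Bᵀ * P * B + R)⁻¹ = 1 := Matrix.mul_nonsing_inv _ hdet
  have hMM' : (Bᵀ * P * B + R)⁻¹ * (Bᵀ * P * B + R) = 1 := Matrix.nonsing_inv_mul _ hdet
  have hMi : ((Bᵀ * P * B + R)⁻¹)ᵀ = (Bᵀ * P * B + R)⁻¹ := by
    rw [Matrix.transpose_nonsing_inv, hMsym]
  have hGT : (Bᵀ * P * A)ᵀ = Aᵀ * P * B := by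
    simp [transpose_mul, transpose_transpose, hP, Matrix.mul_assoc]
  have hGMG : (Bᵀ * P * A)ᵀ * ((Bᵀ * P * B + R)⁻¹ * (Bᵀ * P * A))
      = Aᵀ * P * B * (Bᵀ * P * B + R)⁻¹ * Bᵀ * P * A := by
    rw [hGT]; simp [Matrix.mul_assoc]
  rw [L_expand A B P R hP K, quadratic_expand (Bᵀ * P * B + R) hMi hMM hMM' K (Bᵀ * P * A),
    hGMG, hGT]
  abel

end Algebra
section Riccati
variable {n m : ℕ} (A : Matrix (Fin n) (Fin n) ℝ) (B : Matrix (Fin n) (Fin m) ℝ)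

lemma herm_t {p : ℕ} {M : Matrix (Fin p) (Fin p) ℝ} (hM : M.PosSemidef) : Mᵀ = M := by
  simpa [conjTranspose_eq_transpose_of_trivial] using hM.1.eq

lemma M_pd {P : Matrix (Fin n) (Fin n) ℝ} {R : Matrix (Fin m) (Fin m) ℝ}
    (hP : P.PosSemidef) (hR : R.PosDef) : (Bᵀ * P * B + R).PosDef :=
  Matrix.PosDef.posSemidef_add (psd_conj hP B) hR

lemma riccati_succ_eq (Q : Matrix (Fin n) (Fin n) ℝ) (R : Matrix (Fin m) (Fin m) ℝ)
    (k : ℕ) (hP : (riccati A B Q R k).PosSemidef) (hR : R.PosDef) :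
    riccati A B Q R (k + 1)
      = (A - B * ((Bᵀ * riccati A B Q R k * B + R)⁻¹ * (Bᵀ * riccati A B Q R k * A)))ᵀ
          * riccati A B Q R k
          * (A - B * ((Bᵀ * riccati A B Q R k * B + R)⁻¹ * (Bᵀ * riccati A B Q R k * A)))
        + ((Bᵀ * riccati A B Q R k * B + R)⁻¹ * (Bᵀ * riccati A B Q R k * A))ᵀ * R
          * ((Bᵀ * riccati A B Q R k * B + R)⁻¹ * (Bᵀ * riccati A B Q R k * A))
        + Q := by
  set P := riccati A B Q R k with hPdef
  have hkey := key_identity A B P Q R (herm_t hP) (herm_t hR.posSemidef)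
    (M_pd B hP hR).isUnit ((Bᵀ * P * B + R)⁻¹ * (Bᵀ * P * A))
  rw [sub_self] at hkey
  simp only [Matrix.transpose_zero, Matrix.zero_mul, Matrix.mul_zero, add_zero] at hkey
  rw [show riccati A B Q R (k + 1)
      = Aᵀ * P * A - Aᵀ * P * B * (Bᵀ * P * B + R)⁻¹ * Bᵀ * P * A + Q from rfl, ← hkey]

lemma riccati_psd (Q : Matrix (Fin n) (Fin n) ℝ) (R : Matrix (Fin m) (Fin m) ℝ)
    (hQ : Q.PosSemidef) (hR : R.PosDef) : ∀ k, (riccati A B Q R k).PosSemidef := by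
  intro k
  induction k with
  | zero => exact Matrix.PosSemidef.zero
  | succ k ih =>
      rw [riccati_succ_eq A B Q R k ih hR]
      exact ((psd_conj ih _).add (psd_conj hR.posSemidef _)).add hQ

end Riccati

section Mono
variable {n m : ℕ} (A : Matrix (Fin n) (Fin n) ℝ) (B : Matrix (Fin n) (Fin m) ℝ)

lemma riccati_mono (Q₁ Q₂ : Matrix (Fin n) (Fin n) ℝ) (R₁ R₂ : Matrix (Fin m) (Fin m) ℝ)
    (hQ1 : Q₁.PosSemidef) (hQ2 : Q₂.PosSemidef) (hR1 : R₁.PosDef) (hR2 : R₂.PosDef)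
    (hQ : loewnerLE Q₁ Q₂) (hR : loewnerLE R₁ R₂) :
    ∀ k, loewnerLE (riccati A B Q₁ R₁ k) (riccati A B Q₂ R₂ k) := by
  intro k
  induction k with
  | zero => exact loewnerLE_refl 0 (by simp)
  | succ k ih =>
      set P₁ := riccati A B Q₁ R₁ k with hP1def
      set P₂ := riccati A B Q₂ R₂ k with hP2def
      have hP1 : P₁.PosSemidef := riccati_psd A B Q₁ R₁ hQ1 hR1 k
      have hP2 : P₂.PosSemidef := riccati_psd A B Q₂ R₂ hQ2 hR2 k
      set K := (Bᵀ * P₂ * B + R₂)⁻¹ * (Bᵀ * P₂ * A) with hKdef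
      have hk1 := key_identity A B P₁ Q₁ R₁ (herm_t hP1) (herm_t hR1.posSemidef)
        (M_pd B hP1 hR1).isUnit K
      have h1 : loewnerLE (riccati A B Q₁ R₁ (k + 1))
          ((A - B * K)ᵀ * P₁ * (A - B * K) + Kᵀ * R₁ * K + Q₁) := by
        rw [show riccati A B Q₁ R₁ (k + 1)
          = Aᵀ * P₁ * A - Aᵀ * P₁ * B * (Bᵀ * P₁ * B + R₁)⁻¹ * Bᵀ * P₁ * A + Q₁ from rfl]
        rw [hk1]
        exact loewnerLE_add_psd (psd_conj (M_pd B hP1 hR1).posSemidef _)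
      have h2 : loewnerLE ((A - B * K)ᵀ * P₁ * (A - B * K) + Kᵀ * R₁ * K + Q₁)
          ((A - B * K)ᵀ * P₂ * (A - B * K) + Kᵀ * R₂ * K + Q₂) :=
        loewnerLE_add (loewnerLE_add (loewnerLE_conj ih _)
          (by simpa [Matrix.mul_assoc] using loewnerLE_conj hR Kᵀᵀ)) hQ
      have h3 : (A - B * K)ᵀ * P₂ * (A - B * K) + Kᵀ * R₂ * K + Q₂
          = riccati A B Q₂ R₂ (k + 1) := (riccati_succ_eq A B Q₂ R₂ k hP2 hR2).symm
      rw [← h3]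
      exact loewnerLE_trans h1 h2

end Mono


section Homog
variable {n m : ℕ} (A : Matrix (Fin n) (Fin n) ℝ) (B : Matrix (Fin n) (Fin m) ℝ)

lemma riccati_smul (Q : Matrix (Fin n) (Fin n) ℝ) (R : Matrix (Fin m) (Fin m) ℝ)
    (hQ : Q.PosSemidef) (hR : R.PosDef) {c : ℝ} (hc : 0 < c) :
    ∀ k, riccati A B (c • Q) (c • R) k = c • riccati A B Q R k := by
  intro k
  induction k with
  | zero => simp [riccati]
  | succ k ih =>
      set P := riccati A B Q R k with hPdef
      have hP : P.PosSemidef := riccati_psd A B Q R hQ hR k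
      have hMu : IsUnit (Bᵀ * P * B + R).det :=
        (Matrix.isUnit_iff_isUnit_det _).mp (M_pd B hP hR).isUnit
      have hsM : Bᵀ * (c • P) * B + c • R = c • (Bᵀ * P * B + R) := by
        simp [Matrix.mul_smul, Matrix.smul_mul, smul_add]
      have hinv : (c • (Bᵀ * P * B + R))⁻¹ = c⁻¹ • (Bᵀ * P * B + R)⁻¹ := by
        apply Matrix.inv_eq_left_inv
        rw [Matrix.smul_mul, Matrix.mul_smul, smul_smul, Matrix.nonsing_inv_mul _ hMu,
          inv_mul_cancel₀ hc.ne']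
        simp
      have h1 : riccati A B (c • Q) (c • R) (k + 1)
          = Aᵀ * (c • P) * A -
              Aᵀ * (c • P) * B * (Bᵀ * (c • P) * B + c • R)⁻¹ * Bᵀ * (c • P) * A
            + c • Q := by
        rw [show riccati A B (c • Q) (c • R) (k + 1)
          = Aᵀ * riccati A B (c • Q) (c • R) k * A -
              Aᵀ * riccati A B (c • Q) (c • R) k * B *
                (Bᵀ * riccati A B (c • Q) (c • R) k * B + c • R)⁻¹ *
              Bᵀ * riccati A B (c • Q) (c • R) k * A + c • Q from rfl, ih]
      rw [h1, hsM, hinv]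
      rw [show riccati A B Q R (k + 1)
        = Aᵀ * P * A - Aᵀ * P * B * (Bᵀ * P * B + R)⁻¹ * Bᵀ * P * A + Q from rfl]
      simp only [Matrix.mul_smul, Matrix.smul_mul, smul_smul, smul_sub, smul_add]
      rw [show c * (c⁻¹ * c) = c by field_simp]

end Homog


section Value
variable {n m : ℕ} (A : Matrix (Fin n) (Fin n) ℝ) (B : Matrix (Fin n) (Fin m) ℝ)

lemma quad_conj {p q : ℕ} (C : Matrix (Fin p) (Fin q) ℝ) (X : Matrix (Fin p) (Fin p) ℝ)
    (x : Fin q → ℝ) : x ⬝ᵥ ((Cᵀ * X * C) *ᵥ x) = (C *ᵥ x) ⬝ᵥ (X *ᵥ (C *ᵥ x)) := by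
  rw [← Matrix.mulVec_mulVec, ← Matrix.mulVec_mulVec, Matrix.dotProduct_mulVec,
    Matrix.vecMul_transpose]

lemma riccati_value (Q : Matrix (Fin n) (Fin n) ℝ) (R : Matrix (Fin m) (Fin m) ℝ)
    (k : ℕ) (hQ : Q.PosSemidef) (hR : R.PosDef) (v u w : _)
    (hu : u = -(((Bᵀ * riccati A B Q R k * B + R)⁻¹ * Bᵀ * riccati A B Q R k * A) *ᵥ v))
    (hw : w = A *ᵥ v + B *ᵥ u) :
    v ⬝ᵥ (riccati A B Q R (k + 1) *ᵥ v)
      = v ⬝ᵥ (Q *ᵥ v) + u ⬝ᵥ (R *ᵥ u) + w ⬝ᵥ (riccati A B Q R k *ᵥ w) := by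
  set P := riccati A B Q R k with hPdef
  have hP : P.PosSemidef := riccati_psd A B Q R hQ hR k
  set K := (Bᵀ * P * B + R)⁻¹ * (Bᵀ * P * A) with hK
  have hKassoc : (Bᵀ * P * B + R)⁻¹ * Bᵀ * P * A = K := by
    rw [hK]; simp [Matrix.mul_assoc]
  have hu' : u = -(K *ᵥ v) := by rw [hu, hKassoc]
  have hw' : w = (A - B * K) *ᵥ v := by
    rw [hw, hu', Matrix.mulVec_neg, Matrix.mulVec_mulVec, Matrix.sub_mulVec,
      sub_eq_add_neg]
  rw [riccati_succ_eq A B Q R k hP hR, Matrix.add_mulVec, Matrix.add_mulVec,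
    dotProduct_add, dotProduct_add, quad_conj, quad_conj, ← hw', hu']
  simp only [Matrix.mulVec_neg, dotProduct_neg, neg_dotProduct, neg_neg]
  ring

end Value

/-- Appendix Lemma 2(a): the horizon-`T` MPC value function contracts by the factor
`γ = (1−ρ)α/(1−δ)` along the MPC closed-loop trajectory. -/
theorem mpc_value_contraction {n m : ℕ}
    (A : Matrix (Fin n) (Fin n) ℝ) (B : Matrix (Fin n) (Fin m) ℝ)
    (T : ℕ) (hT : 1 ≤ T) (δ : ℝ) (hδ0 : 0 ≤ δ) (hδ1 : δ < 1)
    (Q : ℕ → Matrix (Fin n) (Fin n) ℝ) (R : ℕ → Matrix (Fin m) (Fin m) ℝ)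
    (hQpd : ∀ t, (Q t).PosDef) (hRpd : ∀ t, (R t).PosDef)
    (hQlow : ∀ t, loewnerLE ((1 - δ) • Q t) (Q (t + 1)))
    (hQhigh : ∀ t, loewnerLE (Q (t + 1)) ((1 + δ) • Q t))
    (hRlow : ∀ t, loewnerLE ((1 - δ) • R t) (R (t + 1)))
    (hRhigh : ∀ t, loewnerLE (R (t + 1)) ((1 + δ) • R t))
    (x : ℕ → Fin n → ℝ) (u : ℕ → Fin m → ℝ)
    (hu : ∀ t, u t = -(((Bᵀ * riccati A B (Q t) (R t) (T - 1) * B + R t)⁻¹ *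
        Bᵀ * riccati A B (Q t) (R t) (T - 1) * A) *ᵥ x t))
    (hx : ∀ t, x (t + 1) = A *ᵥ x t + B *ᵥ u t)
    (ρ : ℝ) (hρ0 : 0 < ρ) (hρ1 : ρ < 1)
    (hρP : ∀ t, loewnerLE (ρ • riccati A B (Q t) (R t) T) (Q t))
    (α : ℝ) (hα : 1 < α)
    (hαP : ∀ t, loewnerLE (riccati A B (Q t) (R t) T)
      (α • riccati A B (Q t) (R t) (T - 1)))
    (γ : ℝ) (hγ : γ = (1 - ρ) * α / (1 - δ)) :
    ∀ t : ℕ,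
      x (t + 1) ⬝ᵥ (riccati A B (Q (t + 1)) (R (t + 1)) T *ᵥ x (t + 1)) ≤
        γ * (x t ⬝ᵥ (riccati A B (Q t) (R t) T *ᵥ x t)) := by
  obtain ⟨T', rfl⟩ : ∃ T', T = T' + 1 := ⟨T - 1, (Nat.succ_pred_eq_of_pos hT).symm⟩
  simp only [Nat.add_sub_cancel] at hu hαP ⊢
  intro t
  have h1δ : (0:ℝ) < 1 - δ := by linarith
  set c : ℝ := (1 - δ)⁻¹ with hcdef
  have hc : 0 < c := by positivity
  have hc1 : (1 - δ) * c = 1 := mul_inv_cancel₀ h1δ.ne'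
  have hδc : 1 + δ ≤ c := by nlinarith [sq_nonneg δ]
  -- Step A: loewnerLE (riccati (t+1) T) (c • riccati t T)
  have hcQ : loewnerLE (Q (t + 1)) (c • Q t) := by
    refine loewnerLE_trans (hQhigh t) ?_
    have : c • Q t - (1 + δ) • Q t = (c - (1 + δ)) • Q t := by rw [← sub_smul]
    rw [loewnerLE, this]
    exact psd_smul (by linarith) (hQpd t).posSemidef
  have hcR : loewnerLE (R (t + 1)) (c • R t) := by
    refine loewnerLE_trans (hRhigh t) ?_
    have : c • R t - (1 + δ) • R t = (c - (1 + δ)) • R t := by rw [← sub_smul]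
    rw [loewnerLE, this]
    exact psd_smul (by linarith) (hRpd t).posSemidef
  have hmono := riccati_mono A B (Q (t + 1)) (c • Q t) (R (t + 1)) (c • R t)
    (hQpd (t + 1)).posSemidef (psd_smul hc.le (hQpd t).posSemidef)
    (hRpd (t + 1)) (pd_smul hc (hRpd t)) hcQ hcR (T' + 1)
  have hsm := riccati_smul A B (Q t) (R t) (hQpd t).posSemidef (hRpd t) hc (T' + 1)
  rw [hsm] at hmono
  -- quadratic-form inequalities
  set v := x (t + 1) with hvdef
  set a := x t ⬝ᵥ (riccati A B (Q t) (R t) (T' + 1) *ᵥ x t) with hadef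
  set s := v ⬝ᵥ (riccati A B (Q t) (R t) T' *ᵥ v) with hsdef
  have q1 : v ⬝ᵥ (riccati A B (Q (t + 1)) (R (t + 1)) (T' + 1) *ᵥ v)
      ≤ c * (v ⬝ᵥ (riccati A B (Q t) (R t) (T' + 1) *ᵥ v)) := by
    have := loewnerLE_quad hmono v
    rwa [Matrix.smul_mulVec, dotProduct_smul, smul_eq_mul] at this
  have q2 : v ⬝ᵥ (riccati A B (Q t) (R t) (T' + 1) *ᵥ v) ≤ α * s := by
    have := loewnerLE_quad (hαP t) v
    rwa [Matrix.smul_mulVec, dotProduct_smul, smul_eq_mul] at this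
  have q3 : a = x t ⬝ᵥ (Q t *ᵥ x t) + u t ⬝ᵥ (R t *ᵥ u t) + s :=
    riccati_value A B (Q t) (R t) T' (hQpd t).posSemidef (hRpd t)
      (x t) (u t) v (hu t) (hx t)
  have q4 : ρ * a ≤ x t ⬝ᵥ (Q t *ᵥ x t) := by
    have := loewnerLE_quad (hρP t) (x t)
    rwa [Matrix.smul_mulVec, dotProduct_smul, smul_eq_mul] at this
  have q5 : 0 ≤ u t ⬝ᵥ (R t *ᵥ u t) := psd_quad (hRpd t).posSemidef _
  have ha : 0 ≤ a := psd_quad (riccati_psd A B (Q t) (R t)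
    (hQpd t).posSemidef (hRpd t) (T' + 1)) (x t)
  have hs : s ≤ (1 - ρ) * a := by nlinarith
  calc v ⬝ᵥ (riccati A B (Q (t + 1)) (R (t + 1)) (T' + 1) *ᵥ v)
      ≤ c * (v ⬝ᵥ (riccati A B (Q t) (R t) (T' + 1) *ᵥ v)) := q1
    _ ≤ c * (α * s) := mul_le_mul_of_nonneg_left q2 hc.le
    _ ≤ c * (α * ((1 - ρ) * a)) := by
        refine mul_le_mul_of_nonneg_left ?_ hc.le
        exact mul_le_mul_of_nonneg_left hs (by linarith)
    _ = γ * a := by rw [hγ, hcdef]; field_simp
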